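/- Using the shortest pilots with full pilot energy is optimal for the uplink variables of P2: if (τ, {p_m^{up}}, {p_m^{dl}}) is a feasible point of P2, then (U+G, {E_m/(U+G)}, {p_m^{dl}}) is also feasible, and its objective value Σ_m α_m SE_m is greater than or equal to that of the original point. -/
import Mathlib


open Finset

noncomputable section

/-- Effective estimation quality `θ_m = τ p_m^{up} β_m² / (1 + τ p_m^{up} β_m)`. -/
def thetaUn {U : ℕ} (β : Fin U → ℝ) (τ : ℕ) (pup : Fin U → ℝ) (m : Fin U) : ℝ :=
  (τ : ℝ) * pup m * (β m) ^ 2 / (1 + (τ : ℝ) * pup m * β m)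

/-- `SINR_m = N p_m^{dl} θ_m / (1 + β_m (P_mu + Σ_u p_u^{dl}))`. -/
def sinrUn {U : ℕ} (N : ℕ) (Pmu : ℝ) (β : Fin U → ℝ) (τ : ℕ)
    (pup pdl : Fin U → ℝ) (m : Fin U) : ℝ :=
  (N : ℝ) * pdl m * thetaUn β τ pup m / (1 + β m * (Pmu + ∑ u, pdl u))

/-- `SE_m = (1 - τ/T) log₂(1 + SINR_m)`. -/
def seUn {U : ℕ} (N T : ℕ) (Pmu : ℝ) (β : Fin U → ℝ) (τ : ℕ)
    (pup pdl : Fin U → ℝ) (m : Fin U) : ℝ :=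
  (1 - (τ : ℝ) / (T : ℝ)) * Real.logb 2 (1 + sinrUn N Pmu β τ pup pdl m)

/-- The weighted sum spectral efficiency objective `Σ_m α_m SE_m` of problem P2. -/
def objUn {U : ℕ} (N T : ℕ) (Pmu : ℝ) (β α : Fin U → ℝ) (τ : ℕ)
    (pup pdl : Fin U → ℝ) : ℝ :=
  ∑ m, α m * seUn N T Pmu β τ pup pdl m

/-- Feasibility for problem P2 with fixed multicast power `Pmu`. -/
def feasUn {U : ℕ} (G T : ℕ) (P Pmu : ℝ) (E : Fin U → ℝ) (τ : ℕ)
    (pup pdl : Fin U → ℝ) : Prop :=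
  U + G ≤ τ ∧ τ ≤ T ∧
    (∀ m, 0 ≤ pup m ∧ (τ : ℝ) * pup m ≤ E m) ∧
    (∀ m, 0 ≤ pdl m) ∧ ∑ m, pdl m ≤ P - Pmu

lemma theta_aux_mono (b : ℝ) (hb : 0 < b) {x y : ℝ} (hx : 0 ≤ x) (hxy : x ≤ y) :
    x * b ^ 2 / (1 + x * b) ≤ y * b ^ 2 / (1 + y * b) := by
  have h1 : 0 < 1 + x * b := by nlinarith
  have h2 : 0 < 1 + y * b := by nlinarith
  rw [div_le_div_iff₀ h1 h2]
  nlinarith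

/-- using the shortest pilots `τ* = U+G` with full pilot energy
`p_m^{up*} = E_m/(U+G)` is optimal for the uplink variables of P2: it preserves
feasibility and never decreases the weighted sum SE objective. -/
theorem sse_shortest_pilots_full_energy_better
    (U G : ℕ) (hU : 1 ≤ U) (N : ℕ) (hN : 1 ≤ N) (T : ℕ) (hT : U + G ≤ T)
    (P : ℝ) (hP : 0 < P)
    (β E α : Fin U → ℝ)
    (hβ : ∀ m, 0 < β m) (hE : ∀ m, 0 < E m) (hα : ∀ m, 0 < α m)
    (Pmu : ℝ) (hPmu0 : 0 ≤ Pmu) (hPmuP : Pmu ≤ P)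
    (τ : ℕ) (pup pdl : Fin U → ℝ)
    (hfeas : feasUn G T P Pmu E τ pup pdl) :
    feasUn G T P Pmu E (U + G) (fun m => E m / ((U + G : ℕ) : ℝ)) pdl ∧
    objUn N T Pmu β α τ pup pdl ≤
      objUn N T Pmu β α (U + G) (fun m => E m / ((U + G : ℕ) : ℝ)) pdl := by

  obtain ⟨hτ1, hτ2, hup, hdl, hsum⟩ := hfeas
  have hUG : 0 < U + G := lt_of_lt_of_le hU (Nat.le_add_right U G)
  have hUGr : (0:ℝ) < ((U+G:ℕ):ℝ) := by exact_mod_cast hUG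
  have hT0 : (0:ℝ) < (T:ℝ) := by
    have : 0 < T := lt_of_lt_of_le hUG hT
    exact_mod_cast this
  have hnewmul : ∀ m, ((U+G:ℕ):ℝ) * (E m / ((U+G:ℕ):ℝ)) = E m := fun m =>
    mul_div_cancel₀ (E m) (ne_of_gt hUGr)
  refine ⟨⟨le_rfl, hT, fun m => ⟨le_of_lt (div_pos (hE m) hUGr), by rw [hnewmul m]⟩,
    hdl, hsum⟩, ?_⟩
  unfold objUn
  apply Finset.sum_le_sum
  intro m _
  apply mul_le_mul_of_nonneg_left _ (le_of_lt (hα m))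
  unfold seUn
  have hτr : ((U+G:ℕ):ℝ) ≤ (τ:ℝ) := by exact_mod_cast hτ1
  have hpre1 : 0 ≤ 1 - (τ:ℝ)/(T:ℝ) := by
    have : (τ:ℝ) ≤ (T:ℝ) := by exact_mod_cast hτ2
    have := div_le_one_of_le₀ this (le_of_lt hT0)
    linarith
  have hpre2 : 1 - (τ:ℝ)/(T:ℝ) ≤ 1 - ((U+G:ℕ):ℝ)/(T:ℝ) := by
    have := div_le_div_of_nonneg_right (c := (T:ℝ)) hτr hT0.le
    linarith
  -- denominator of SINR positive
  have hden : 0 < 1 + β m * (Pmu + ∑ u, pdl u) := by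
    have h1 : 0 ≤ ∑ u, pdl u := Finset.sum_nonneg fun u _ => hdl u
    have := (hβ m).le
    nlinarith
  -- theta monotone
  have hx : 0 ≤ (τ:ℝ) * pup m := by
    rcases hup m with ⟨h1, _⟩
    positivity
  have hxy : (τ:ℝ) * pup m ≤ ((U+G:ℕ):ℝ) * (E m / ((U+G:ℕ):ℝ)) := by
    rw [hnewmul m]; exact (hup m).2
  have hθ : thetaUn β τ pup m ≤ thetaUn β (U+G) (fun m => E m / ((U+G:ℕ):ℝ)) m :=
    theta_aux_mono (β m) (hβ m) hx hxy
  have hθ0 : 0 ≤ thetaUn β τ pup m := by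
    unfold thetaUn
    have hb := (hβ m).le
    have hd : 0 < 1 + (τ:ℝ) * pup m * β m := by nlinarith
    positivity
  have hsinr : sinrUn N Pmu β τ pup pdl m ≤
      sinrUn N Pmu β (U+G) (fun m => E m / ((U+G:ℕ):ℝ)) pdl m := by
    unfold sinrUn
    apply div_le_div_of_nonneg_right _ hden.le
    have hN0 : (0:ℝ) ≤ (N:ℝ) := Nat.cast_nonneg N
    exact mul_le_mul_of_nonneg_left hθ (by have := hdl m; positivity)
  have hsinr0 : 0 ≤ sinrUn N Pmu β τ pup pdl m := by
    unfold sinrUn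
    have hN0 : (0:ℝ) ≤ (N:ℝ) := Nat.cast_nonneg N
    have := hdl m
    positivity
  have hlog1 : 0 ≤ Real.logb 2 (1 + sinrUn N Pmu β τ pup pdl m) :=
    Real.logb_nonneg one_lt_two (by linarith)
  have hlog : Real.logb 2 (1 + sinrUn N Pmu β τ pup pdl m) ≤
      Real.logb 2 (1 + sinrUn N Pmu β (U+G) (fun m => E m / ((U+G:ℕ):ℝ)) pdl m) :=
    Real.logb_le_logb_of_le one_lt_two (by linarith) (by linarith)
  exact mul_le_mul hpre2 hlog hlog1 (by linarith)
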